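/- If Λ₊ ≠ ∅ then there exists a constant c' > 0 such that for every compact set K' ⊆ Λ₊ (with d(K', ∂Λ₊) > 0), the supporting function satisfies H_{K'}(Φ(ζ,ζ)) ≤ −c' d(K',∂Λ₊) |ζ|² for every ζ ∈ E; in particular ζ ↦ e^{H_{K'}(Φ(ζ,ζ))} belongs to L^q(E) for every q ∈ (0,∞]. -/

import Mathlib

open MeasureTheory

lemma aux_integrable_gauss {b : ℝ} (hb : 0 < b) :
    Integrable (fun z : ℂ => Real.exp (-b * ‖z‖^2)) := by
  have h := GaussianFourier.integrable_cexp_neg_mul_sq_norm_add (V := ℂ) (b := (b:ℂ))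
    (by simpa using hb) 0 0
  have h2 := h.norm
  simp only [zero_mul, add_zero] at h2
  convert h2 using 2 with z
  have e : (-(b:ℂ) * (‖z‖:ℂ)^2) = ((-b*‖z‖^2 : ℝ) : ℂ) := by push_cast; ring
  rw [e, ← Complex.ofReal_exp, Complex.norm_real, Real.norm_eq_abs, abs_of_pos (Real.exp_pos _)]

/-- If `Λ₊ ≠ ∅`, there is `c' > 0` such that for every nonempty compact `K' ⊆ Λ₊` at distance
at least `r > 0` from `∂Λ₊` (i.e. all balls `B(λ, r)`, `λ ∈ K'`, stay in `Λ₊`), the supporting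
function satisfies `H_{K'}(Q ζ) ≤ -c' r ‖ζ‖²` for every `ζ ∈ E`; in particular
`ζ ↦ e^{H_{K'}(Q ζ)}` belongs to `L^q(E)` for every `q ∈ (0,∞]`. Here `Q ζ = Φ(ζ,ζ)` is the
quadratic part of the Hermitian map `Φ`. -/
theorem stmt_15 {n m : ℕ} (Q : (Fin n → ℂ) → EuclideanSpace ℝ (Fin m))
    (hQc : Continuous Q)
    (hQh : ∀ (c : ℂ) (ζ : Fin n → ℂ), Q (c • ζ) = (‖c‖ ^ 2 : ℝ) • Q ζ)
    (hne : {lam : EuclideanSpace ℝ (Fin m) |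
      ∀ ζ : Fin n → ℂ, ζ ≠ 0 → 0 < (inner ℝ lam (Q ζ) : ℝ)}.Nonempty) :
    ∃ c' > (0 : ℝ), ∀ K' : Set (EuclideanSpace ℝ (Fin m)), IsCompact K' → K'.Nonempty →
      ∀ r > (0 : ℝ),
      (∀ lam ∈ K', Metric.ball lam r ⊆ {lam : EuclideanSpace ℝ (Fin m) |
          ∀ ζ : Fin n → ℂ, ζ ≠ 0 → 0 < (inner ℝ lam (Q ζ) : ℝ)}) →
      (∀ ζ : Fin n → ℂ,
        sSup ((fun μ => (inner ℝ μ (Q ζ) : ℝ)) '' (-K')) ≤ -(c' * r * ‖ζ‖ ^ 2)) ∧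
      (∀ q : ℝ, 0 < q →
        (∫⁻ ζ : Fin n → ℂ, ENNReal.ofReal
          (Real.exp (sSup ((fun μ => (inner ℝ μ (Q ζ) : ℝ)) '' (-K'))) ^ q)) < ⊤) ∧
      BddAbove (Set.range fun ζ : Fin n → ℂ =>
        Real.exp (sSup ((fun μ => (inner ℝ μ (Q ζ) : ℝ)) '' (-K')))) := by
  obtain ⟨lam0, hlam0⟩ := hne
  have hQ0 : Q 0 = 0 := by
    have := hQh 0 0
    simpa using this
  have hQne : ∀ ζ : Fin n → ℂ, ζ ≠ 0 → Q ζ ≠ 0 := by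
    intro ζ hζ h
    have h2 := hlam0 ζ hζ
    rw [h] at h2
    simp at h2
  -- the key lower bound on ‖Q ζ‖
  obtain ⟨c₀, hc₀, hlow⟩ : ∃ c₀ > (0:ℝ), ∀ ζ : Fin n → ℂ, c₀ * ‖ζ‖^2 ≤ ‖Q ζ‖ := by
    by_cases hs : (Metric.sphere (0 : Fin n → ℂ) 1).Nonempty
    · obtain ⟨ζ₀, hζ₀, hmin⟩ := (isCompact_sphere (0 : Fin n → ℂ) 1).exists_isMinOn hs
        hQc.norm.continuousOn
      have hζ₀ne : ζ₀ ≠ 0 := by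
        intro h
        rw [h] at hζ₀
        simp at hζ₀
      refine ⟨‖Q ζ₀‖, norm_pos_iff.mpr (hQne ζ₀ hζ₀ne), ?_⟩
      intro ζ
      by_cases hζ : ζ = 0
      · simp [hζ, hQ0]
      · have hnz : (0:ℝ) < ‖ζ‖ := norm_pos_iff.mpr hζ
        set u : Fin n → ℂ := (‖ζ‖⁻¹ : ℂ) • ζ with hu_def
        have hu : u ∈ Metric.sphere (0 : Fin n → ℂ) 1 := by
          simp [hu_def, norm_smul, inv_mul_cancel₀ hnz.ne']
        have hQζ : Q ζ = (‖ζ‖^2 : ℝ) • Q u := by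
          have h1 : ((‖ζ‖ : ℂ)) • u = ζ := by
            rw [hu_def, smul_smul]
            norm_cast
            rw [mul_inv_cancel₀ hnz.ne', one_smul]
          have h2 := hQh (‖ζ‖ : ℂ) u
          rw [h1] at h2
          simpa using h2
        rw [hQζ, norm_smul]
        have hmin' := hmin hu
        simp only [Real.norm_eq_abs, abs_of_nonneg (sq_nonneg ‖ζ‖)]
        calc ‖Q ζ₀‖ * ‖ζ‖^2 ≤ ‖Q u‖ * ‖ζ‖^2 := by
              apply mul_le_mul_of_nonneg_right hmin' (sq_nonneg _)
          _ = ‖ζ‖^2 * ‖Q u‖ := by ring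
    · refine ⟨1, one_pos, ?_⟩
      intro ζ
      have hζ : ζ = 0 := by
        by_contra h
        have hnz : (0:ℝ) < ‖ζ‖ := norm_pos_iff.mpr h
        exact hs ⟨(‖ζ‖⁻¹ : ℂ) • ζ, by
          simp [norm_smul, inv_mul_cancel₀ hnz.ne']⟩
      simp [hζ, hQ0]
  refine ⟨c₀ / 2, by positivity, ?_⟩
  intro K' hK'c hK'ne r hr hball
  have key : ∀ ζ : Fin n → ℂ,
      sSup ((fun μ => (inner ℝ μ (Q ζ) : ℝ)) '' (-K')) ≤ -(c₀ / 2 * r * ‖ζ‖ ^ 2) := by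
    intro ζ
    have hlam : ∀ lam ∈ K', c₀ / 2 * r * ‖ζ‖ ^ 2 ≤ (inner ℝ lam (Q ζ) : ℝ) := by
      intro lam hlamK
      by_cases hζ : ζ = 0
      · simp [hζ, hQ0]
      · have hQz : Q ζ ≠ 0 := hQne ζ hζ
        have hQn : (0:ℝ) < ‖Q ζ‖ := norm_pos_iff.mpr hQz
        have h1 : r / 2 * ‖Q ζ‖ ≤ (inner ℝ lam (Q ζ) : ℝ) := by
          set μ := lam - (r / 2 / ‖Q ζ‖) • Q ζ with hμ_def
          have hμ : μ ∈ Metric.ball lam r := by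
            rw [Metric.mem_ball, dist_eq_norm, hμ_def]
            simp only [sub_sub_cancel_left, norm_neg, norm_smul, Real.norm_eq_abs]
            rw [abs_of_pos (by positivity), div_mul_cancel₀ _ hQn.ne']
            linarith
          have hpos := hball lam hlamK hμ ζ hζ
          have heq : (inner ℝ μ (Q ζ) : ℝ)
              = (inner ℝ lam (Q ζ) : ℝ) - r / 2 / ‖Q ζ‖ * ‖Q ζ‖^2 := by
            rw [hμ_def, inner_sub_left, real_inner_smul_left,
              real_inner_self_eq_norm_sq]
          rw [heq] at hpos
          have : r / 2 / ‖Q ζ‖ * ‖Q ζ‖^2 = r / 2 * ‖Q ζ‖ := by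
            field_simp
          linarith [this ▸ hpos]
        have h2 := hlow ζ
        nlinarith
    apply csSup_le ((hK'ne.neg).image _)
    rintro x ⟨μ, hμ, rfl⟩
    have hμK : -μ ∈ K' := Set.mem_neg.mp hμ
    have := hlam (-μ) hμK
    rw [inner_neg_left] at this
    linarith
  refine ⟨key, ?_, ⟨1, ?_⟩⟩
  · -- integrability
    intro q hq
    set a := q * (c₀ / 2 * r) with ha
    have hapos : 0 < a := by positivity
    have hbound : ∀ ζ : Fin n → ℂ,
        ENNReal.ofReal (Real.exp (sSup ((fun μ => (inner ℝ μ (Q ζ) : ℝ)) '' (-K'))) ^ q) ≤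
        ENNReal.ofReal (∏ i, Real.exp (-(a / n) * ‖ζ i‖^2)) := by
      intro ζ
      apply ENNReal.ofReal_le_ofReal
      rw [← Real.exp_sum]
      rw [Real.rpow_def_of_pos (Real.exp_pos _), Real.log_exp]
      apply Real.exp_le_exp.mpr
      have hsum : ∑ i, ‖ζ i‖^2 ≤ (n:ℝ) * ‖ζ‖^2 := by
        calc ∑ i, ‖ζ i‖^2 ≤ ∑ _i : Fin n, ‖ζ‖^2 := by
              apply Finset.sum_le_sum
              intro i _
              have h := norm_le_pi_norm ζ i
              nlinarith [norm_nonneg (ζ i)]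
          _ = (n:ℝ) * ‖ζ‖^2 := by
              simp [Finset.sum_const, Finset.card_univ]
      have hterm : ∑ i, -(a / n) * ‖ζ i‖^2 = -((a/n) * ∑ i, ‖ζ i‖^2) := by
        rw [Finset.mul_sum, ← Finset.sum_neg_distrib]
        simp [mul_comm, neg_mul]
      rw [hterm]
      have hkey := key ζ
      have hdiv : (a / n) * ∑ i, ‖ζ i‖^2 ≤ a * ‖ζ‖^2 := by
        rcases Nat.eq_zero_or_pos n with h0 | h0
        · subst h0
          simp
          positivity
        · have hn : (0:ℝ) < n := by exact_mod_cast h0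
          rw [div_mul_eq_mul_div, div_le_iff₀ hn]
          have hsum0 : 0 ≤ ∑ i, ‖ζ i‖^2 :=
            Finset.sum_nonneg fun i _ => sq_nonneg _
          nlinarith
      have : sSup ((fun μ => (inner ℝ μ (Q ζ) : ℝ)) '' (-K')) * q ≤ -(a * ‖ζ‖^2) := by
        have := mul_le_mul_of_nonneg_right hkey hq.le
        calc sSup ((fun μ => (inner ℝ μ (Q ζ) : ℝ)) '' (-K')) * q
            ≤ -(c₀ / 2 * r * ‖ζ‖ ^ 2) * q := this
          _ = -(a * ‖ζ‖^2) := by rw [ha]; ring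
      linarith
    calc (∫⁻ ζ : Fin n → ℂ, ENNReal.ofReal
          (Real.exp (sSup ((fun μ => (inner ℝ μ (Q ζ) : ℝ)) '' (-K'))) ^ q))
        ≤ ∫⁻ ζ : Fin n → ℂ, ENNReal.ofReal (∏ i, Real.exp (-(a / n) * ‖ζ i‖^2)) :=
          lintegral_mono hbound
      _ < ⊤ := by
          have hint : Integrable (fun ζ : Fin n → ℂ => ∏ i, Real.exp (-(a/n) * ‖ζ i‖^2)) := by
            apply Integrable.fintype_prod (f := fun (_ : Fin n) (z : ℂ) =>
              Real.exp (-(a/n) * ‖z‖^2))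
            intro i
            have hn : (0:ℝ) < n := by exact_mod_cast i.pos
            exact aux_integrable_gauss (by positivity)
          calc (∫⁻ ζ : Fin n → ℂ, ENNReal.ofReal (∏ i, Real.exp (-(a / n) * ‖ζ i‖^2)))
              ≤ ∫⁻ ζ : Fin n → ℂ, (‖∏ i, Real.exp (-(a / n) * ‖ζ i‖^2)‖₊ : ENNReal) :=
                lintegral_mono fun ζ => Real.ofReal_le_enorm _
            _ < ⊤ := hint.2
  · -- bounded above by 1
    rintro x ⟨ζ', rfl⟩
    have hk := key ζ'
    have h0 : sSup ((fun μ => (inner ℝ μ (Q ζ') : ℝ)) '' (-K')) ≤ 0 := by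
      have : (0:ℝ) ≤ c₀ / 2 * r * ‖ζ'‖ ^ 2 := by positivity
      linarith
    calc Real.exp (sSup ((fun μ => (inner ℝ μ (Q ζ') : ℝ)) '' (-K')))
        ≤ Real.exp 0 := Real.exp_le_exp.mpr h0
      _ = 1 := Real.exp_zero
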